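/- Let D ⊂ ℂⁿ be a bounded domain and let f : D → D be a holomorphic map such that the closure of f(D) is a compact subset of D. Then f has a unique fixed point z₀ ∈ D, and the sequence of iterates f^k converges uniformly on compact subsets of D to the constant map z₀. -/

import Mathlib

open Metric Set Filter Function
open scoped Topology

lemma schwarz_base {n : ℕ} {D : Set (Fin n → ℂ)} {g : (Fin n → ℂ) → ℂ} {z v : Fin n → ℂ} {s : ℝ}
    (hDopen : IsOpen D) (hg : DifferentiableOn ℂ g D) (hg1 : ∀ w ∈ D, ‖g w‖ < 1)
    (hz : z ∈ D) (hgz : g z = 0) (hs : 0 < s) (hball : ball z s ⊆ D) :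
    ‖fderiv ℂ g z v‖ ≤ ‖v‖ / s := by
  rcases eq_or_ne v 0 with rfl | hv
  · simp [div_nonneg, hs.le]
  have hvn : (0:ℝ) < ‖v‖ := norm_pos_iff.mpr hv
  set c : ℝ := s / ‖v‖ with hc
  have hcpos : 0 < c := div_pos hs hvn
  set φ : ℂ → (Fin n → ℂ) := fun l => z + l • v with hφ
  have hφmaps : MapsTo φ (ball (0:ℂ) c) (ball z s) := by
    intro l hl
    simp only [mem_ball, dist_zero_right] at hl
    simp only [φ, mem_ball, dist_eq_norm, add_sub_cancel_left, norm_smul]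
    calc ‖l‖ * ‖v‖ < c * ‖v‖ := by exact mul_lt_mul_of_pos_right hl hvn
    _ = s := by rw [hc, div_mul_cancel₀ s hvn.ne']
  have hφdiff : Differentiable ℂ φ := by
    exact (differentiable_id.smul_const v).const_add z
  set u : ℂ → ℂ := g ∘ φ with hu
  have hudiff : DifferentiableOn ℂ u (ball (0:ℂ) c) :=
    hg.comp hφdiff.differentiableOn (hφmaps.mono_right hball)
  have hu0 : u 0 = 0 := by simp [u, φ, hgz]
  have humaps : MapsTo u (ball (0:ℂ) c) (ball (u 0) 1) := by
    intro l hl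
    simp only [mem_ball, hu0, dist_zero_right]
    exact hg1 _ (hball (hφmaps hl))
  have hschwarz : ‖deriv u 0‖ ≤ 1 / c :=
    Complex.norm_deriv_le_div_of_mapsTo_ball hudiff (humaps.mono_right ball_subset_closedBall) hcpos
  have hφd : HasDerivAt φ v 0 := by
    simpa [φ] using ((hasDerivAt_id (0:ℂ)).smul_const v).const_add z
  have hgd : HasFDerivAt g (fderiv ℂ g z) z :=
    (hg.differentiableAt (hDopen.mem_nhds hz)).hasFDerivAt
  have hφ0 : φ 0 = z := by simp [φ]
  have hgd' : HasFDerivAt g (fderiv ℂ g z) (φ 0) := by rw [hφ0]; exact hgd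
  have hud : HasDerivAt u (fderiv ℂ g z v) 0 := hgd'.comp_hasDerivAt 0 hφd
  rw [hud.deriv] at hschwarz
  calc ‖fderiv ℂ g z v‖ ≤ 1 / c := hschwarz
    _ = ‖v‖ / s := by rw [hc]; field_simp

set_option maxHeartbeats 1600000 in
/-- Ritt–Wavre theorem for bounded domains in ℂⁿ: a holomorphic self-map of a
bounded domain `D ⊆ ℂⁿ` whose image is relatively compact in `D` has a unique
fixed point `z₀`, and its iterates converge uniformly on compact subsets of `D`
to the constant map `z₀`. -/
theorem ritt_wavre_bounded_domain (n : ℕ) (D : Set (Fin n → ℂ))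
    (hDopen : IsOpen D) (hDconn : IsConnected D) (hDbdd : Bornology.IsBounded D)
    (f : (Fin n → ℂ) → (Fin n → ℂ))
    (hf : DifferentiableOn ℂ f D) (hmaps : Set.MapsTo f D D)
    (hcpt : IsCompact (closure (f '' D))) (hsub : closure (f '' D) ⊆ D) :
    ∃ z₀ ∈ D, f z₀ = z₀ ∧ (∀ z ∈ D, f z = z → z = z₀) ∧
      TendstoLocallyUniformlyOn (fun k => f^[k]) (fun _ => z₀) Filter.atTop D := by
  classical
  obtain ⟨a₀, ha₀⟩ := hDconn.nonempty
  obtain ⟨R, hR⟩ : ∃ R, D ⊆ closedBall 0 R := hDbdd.subset_closedBall 0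
  have hR0 : 0 ≤ R := by
    have := hR ha₀
    simp only [mem_closedBall, dist_zero_right] at this
    exact le_trans (norm_nonneg _) this
  set M : ℝ := 2 * R + 1 with hM
  have hMpos : (0:ℝ) < M := by positivity
  have hdist : ∀ x ∈ D, ∀ y ∈ D, ‖x - y‖ ≤ 2 * R := by
    intro x hx y hy
    have h1 := hR hx; have h2 := hR hy
    simp only [mem_closedBall, dist_zero_right] at h1 h2
    calc ‖x - y‖ ≤ ‖x‖ + ‖y‖ := norm_sub_le x y
      _ ≤ 2 * R := by linarith
  set K := closure (f '' D) with hK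
  obtain ⟨δ, hδpos, hδ⟩ := hcpt.exists_thickening_subset_open hDopen hsub
  set t : ℝ := δ / (2 * M) with ht
  have htpos : 0 < t := by positivity
  set q : ℝ := (1 + t)⁻¹ with hq
  have h1t : (0:ℝ) < 1 + t := by linarith
  have hq0 : 0 < q := by positivity
  have hq1 : q < 1 := by
    rw [hq, inv_lt_one_iff₀]; right; linarith
  have hfK : ∀ z ∈ D, f z ∈ K := fun z hz => subset_closure ⟨z, hz, rfl⟩
  -- the Earle–Hamilton dilation stays in D
  have hg_mem : ∀ p ∈ D, ∀ w ∈ D, f w + (t:ℂ) • (f w - f p) ∈ D := by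
    intro p hp w hw
    apply hδ
    rw [Metric.mem_thickening_iff]
    refine ⟨f w, hfK w hw, ?_⟩
    rw [dist_eq_norm, add_sub_cancel_left, norm_smul]
    have h1 : ‖(t:ℂ)‖ = t := by
      rw [Complex.norm_real, Real.norm_eq_abs, abs_of_pos htpos]
    rw [h1]
    calc t * ‖f w - f p‖ ≤ t * (2 * R) :=
          mul_le_mul_of_nonneg_left (hdist _ (hmaps hw) _ (hmaps hp)) htpos.le
      _ ≤ t * M := by nlinarith
      _ = δ / 2 := by rw [ht]; field_simp
      _ < δ := by linarith
  have hiterD : ∀ k, MapsTo (f^[k]) D D := fun k => hmaps.iterate k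
  have hiterDiff : ∀ k, DifferentiableOn ℂ (f^[k]) D := fun k => hf.iterate hmaps k
  have hDiffAt : ∀ k, ∀ z ∈ D, DifferentiableAt ℂ (f^[k]) z := fun k z hz =>
    (hiterDiff k).differentiableAt (hDopen.mem_nhds hz)
  have hfAt : ∀ z ∈ D, DifferentiableAt ℂ f z := fun z hz =>
    hf.differentiableAt (hDopen.mem_nhds hz)
  -- Key induction: contraction of the (normalized) Carathéodory differential metric
  have Q : ∀ k, ∀ z ∈ D, ∀ (v : Fin n → ℂ), ∀ s : ℝ, 0 < s → ball z s ⊆ D →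
      ∀ ℓ : (Fin n → ℂ) → ℂ, DifferentiableOn ℂ ℓ D → (∀ w ∈ D, ‖ℓ w‖ < 1) →
      ℓ (f^[k] z) = 0 →
      ‖fderiv ℂ ℓ (f^[k] z) (fderiv ℂ (f^[k]) z v)‖ ≤ ‖v‖ / ((1 + t) ^ k * s) := by
    intro k
    induction k with
    | zero =>
      intro z hz v s hs hball ℓ hℓd hℓ1 hℓz
      simp only [Function.iterate_zero, id_eq, fderiv_id, fderiv_id', ContinuousLinearMap.coe_id', ContinuousLinearMap.id_apply,
        pow_zero, one_mul] at hℓz ⊢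
      exact schwarz_base hDopen hℓd hℓ1 hz hℓz hs hball
    | succ k ih =>
      intro z hz v s hs hball ℓ hℓd hℓ1 hℓz
      set p := f^[k] z with hp
      have hpD : p ∈ D := hiterD k hz
      have hfpD : f p ∈ D := hmaps hpD
      have hsucc : f^[k+1] z = f p := Function.iterate_succ_apply' f k z
      set h₀ : (Fin n → ℂ) → (Fin n → ℂ) := fun w => f w + (t:ℂ) • (f w - f p) with hh₀
      have h₀D : MapsTo h₀ D D := fun w hw => hg_mem p hpD w hw
      have h₀diff : DifferentiableOn ℂ h₀ D :=
        hf.add (DifferentiableOn.const_smul (hf.sub (differentiableOn_const (f p))) (t:ℂ))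
      set ℓ' : (Fin n → ℂ) → ℂ := ℓ ∘ h₀ with hℓ'
      have hℓ'd : DifferentiableOn ℂ ℓ' D := hℓd.comp h₀diff h₀D
      have hℓ'1 : ∀ w ∈ D, ‖ℓ' w‖ < 1 := fun w hw => hℓ1 _ (h₀D hw)
      have hh₀p : h₀ p = f p := by simp [hh₀]
      have hℓ'p : ℓ' p = 0 := by
        show ℓ (h₀ p) = 0
        rw [hh₀p, ← hsucc, hℓz]
      have hdf : HasFDerivAt f (fderiv ℂ f p) p := (hfAt p hpD).hasFDerivAt
      have hh₀der : HasFDerivAt h₀ ((1 + (t:ℂ)) • fderiv ℂ f p) p := by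
        have h : HasFDerivAt (fun w => f w + (t:ℂ) • (f w - f p))
            (fderiv ℂ f p + (t:ℂ) • fderiv ℂ f p) p := hdf.add ((hdf.sub_const (f p)).const_smul (t:ℂ))
        convert h using 1
        ext w
        simp [add_smul, add_mul]
      have hℓat : HasFDerivAt ℓ (fderiv ℂ ℓ (f p)) (h₀ p) := by
        rw [hh₀p]
        exact (hℓd.differentiableAt (hDopen.mem_nhds hfpD)).hasFDerivAt
      have hℓ'der : HasFDerivAt ℓ'
          ((fderiv ℂ ℓ (f p)).comp ((1 + (t:ℂ)) • fderiv ℂ f p)) p :=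
        hℓat.comp p hh₀der
      have hIH := ih z hz v s hs hball ℓ' hℓ'd hℓ'1 hℓ'p
      rw [hℓ'der.fderiv] at hIH
      have hnorm1t : ‖(1 + (t:ℂ))‖ = 1 + t := by
        rw [show (1 + (t:ℂ)) = ((1 + t : ℝ) : ℂ) by push_cast; ring,
          Complex.norm_real, Real.norm_eq_abs, abs_of_pos h1t]
      simp only [ContinuousLinearMap.coe_comp', Function.comp_apply,
        ContinuousLinearMap.smul_apply, map_smul, norm_smul, hnorm1t] at hIH
      have hchain : fderiv ℂ (f^[k+1]) z = (fderiv ℂ f p).comp (fderiv ℂ (f^[k]) z) := by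
        rw [Function.iterate_succ']
        exact fderiv_comp z (hfAt p hpD) (hDiffAt k z hz)
      rw [hsucc, hchain]
      simp only [ContinuousLinearMap.coe_comp', Function.comp_apply]
      rw [pow_succ]
      have hkey : ‖(fderiv ℂ ℓ (f p)) ((fderiv ℂ f p) ((fderiv ℂ (f^[k]) z) v))‖
          ≤ (‖v‖ / ((1 + t) ^ k * s)) / (1 + t) := by
        rw [le_div_iff₀ h1t, mul_comm]
        exact hIH
      calc ‖(fderiv ℂ ℓ (f p)) ((fderiv ℂ f p) ((fderiv ℂ (f^[k]) z) v))‖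
          ≤ (‖v‖ / ((1 + t) ^ k * s)) / (1 + t) := hkey
        _ = ‖v‖ / ((1 + t) ^ k * (1 + t) * s) := by
            rw [div_div]; ring_nf
  -- operator norm bound for the differential of iterates
  have dbound : ∀ k, ∀ z ∈ D, ∀ s : ℝ, 0 < s → ball z s ⊆ D →
      ‖fderiv ℂ (f^[k]) z‖ ≤ M / ((1 + t) ^ k * s) := by
    intro k z hz s hs hball
    have hden : (0:ℝ) < (1 + t) ^ k * s := mul_pos (pow_pos h1t k) hs
    apply ContinuousLinearMap.opNorm_le_bound _ (div_nonneg hMpos.le hden.le)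
    intro v
    rw [div_mul_eq_mul_div, mul_comm M ‖v‖, ← div_mul_eq_mul_div]
    have hnn : (0:ℝ) ≤ ‖v‖ / ((1 + t) ^ k * s) * M :=
      mul_nonneg (div_nonneg (norm_nonneg _) hden.le) hMpos.le
    rw [pi_norm_le_iff_of_nonneg hnn]
    intro i
    set c : Fin n → ℂ := f^[k] z with hc
    have hcD : c ∈ D := hiterD k hz
    set ℓ : (Fin n → ℂ) → ℂ := fun w => (M:ℂ)⁻¹ * (w i - c i) with hℓdef
    have hℓdiff : DifferentiableOn ℂ ℓ D := by
      apply DifferentiableOn.const_mul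
      exact ((ContinuousLinearMap.proj i : (Fin n → ℂ) →L[ℂ] ℂ).differentiable.sub_const
        (c i)).differentiableOn
    have hℓ1 : ∀ w ∈ D, ‖ℓ w‖ < 1 := by
      intro w hw
      rw [hℓdef]
      simp only [norm_mul, norm_inv]
      have h1 : ‖w i - c i‖ ≤ ‖w - c‖ := by
        have := norm_le_pi_norm (w - c) i
        simpa using this
      have h2 : ‖w - c‖ ≤ 2 * R := hdist w hw c hcD
      have h3 : ‖(M:ℂ)‖ = M := by
        rw [Complex.norm_real, Real.norm_eq_abs, abs_of_pos hMpos]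
      rw [show ‖((M:ℝ):ℂ)‖ = M from h3]
      calc M⁻¹ * ‖w i - c i‖ ≤ M⁻¹ * (2 * R) := by
            apply mul_le_mul_of_nonneg_left (le_trans h1 h2) (by positivity)
        _ < 1 := by
            rw [inv_mul_lt_iff₀ hMpos, mul_one, hM]; linarith
    have hℓ0 : ℓ c = 0 := by simp [hℓdef]
    have hder : HasFDerivAt ℓ
        ((M:ℂ)⁻¹ • (ContinuousLinearMap.proj i : (Fin n → ℂ) →L[ℂ] ℂ)) c := by
      have h1 : HasFDerivAt (fun w : Fin n → ℂ => w i - c i)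
          (ContinuousLinearMap.proj i : (Fin n → ℂ) →L[ℂ] ℂ) c :=
        (ContinuousLinearMap.proj i : (Fin n → ℂ) →L[ℂ] ℂ).hasFDerivAt.sub_const (c i)
      exact h1.const_mul _
    have hQ := Q k z hz v s hs hball ℓ hℓdiff hℓ1 hℓ0
    rw [← hc, hder.fderiv] at hQ
    simp only [ContinuousLinearMap.smul_apply, ContinuousLinearMap.proj_apply,
      norm_smul, norm_inv] at hQ
    have h3 : ‖((M:ℝ):ℂ)‖ = M := by
      rw [Complex.norm_real, Real.norm_eq_abs, abs_of_pos hMpos]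
    rw [h3] at hQ
    have := mul_le_mul_of_nonneg_right hQ hMpos.le
    rw [mul_comm (M⁻¹) _, mul_assoc, inv_mul_cancel₀ hMpos.ne', mul_one] at this
    exact this
  -- local Lipschitz estimate for iterates
  have lip : ∀ k, ∀ z : Fin n → ℂ, ∀ s : ℝ, 0 < s → ball z (2 * s) ⊆ D →
      ∀ u ∈ ball z s, ∀ w ∈ ball z s,
      ‖f^[k] u - f^[k] w‖ ≤ M / ((1 + t) ^ k * s) * ‖u - w‖ := by
    intro k z s hs hball u hu w hw
    have hsub1 : ball z s ⊆ D := (ball_subset_ball (by linarith)).trans hball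
    apply Convex.norm_image_sub_le_of_norm_fderiv_le
      (fun x hx => hDiffAt k x (hsub1 hx))
      (fun x hx => ?_) (convex_ball z s) hw hu
    apply dbound k x (hsub1 hx) s hs
    intro y hy
    apply hball
    rw [mem_ball] at hx hy ⊢
    calc dist y z ≤ dist y x + dist x z := dist_triangle y x z
      _ < s + s := add_lt_add hy hx
      _ = 2 * s := by ring
  -- geometric decay of distances between iterates at any two points of D
  have chain : ∀ a ∈ D, ∀ b ∈ D, ∃ C : ℝ, 0 ≤ C ∧
      ∀ k, ‖f^[k] a - f^[k] b‖ ≤ C * q ^ k := by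
    intro a ha b hb
    have hpc : IsPathConnected D := (hDopen.isConnected_iff_isPathConnected).mp hDconn
    obtain ⟨γ, hγmem⟩ := hpc.joinedIn a ha b hb
    set S : Set (Fin n → ℂ) := range γ with hS
    have hScpt : IsCompact S := isCompact_range γ.continuous
    have hSD : S ⊆ D := range_subset_iff.mpr hγmem
    obtain ⟨σ, hσpos, hσ⟩ := hScpt.exists_thickening_subset_open hDopen hSD
    have huc : UniformContinuous γ := CompactSpace.uniformContinuous_of_continuous γ.continuous
    obtain ⟨η, hηpos, hη⟩ := Metric.uniformContinuous_iff.mp huc (σ / 2) (by positivity)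
    obtain ⟨N, hN⟩ := exists_nat_gt (1 / η)
    have hNpos : 0 < (N:ℝ) := lt_trans (by positivity) hN
    set θ : ℕ → unitInterval := fun i => Set.projIcc 0 1 zero_le_one ((i:ℝ) / N) with hθ
    have hθstep : ∀ i : ℕ, dist (θ (i+1)) (θ i) < η := by
      intro i
      have h1 : dist (θ (i+1)) (θ i) ≤ dist (((i:ℝ)+1) / N) ((i:ℝ) / N) := by
        have := (LipschitzWith.projIcc (zero_le_one (α := ℝ))).dist_le_mul
          (((i:ℝ)+1) / N) ((i:ℝ) / N)
        simp only [NNReal.coe_one, one_mul] at this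
        calc dist (θ (i+1)) (θ i) = dist (Set.projIcc 0 1 zero_le_one (((i:ℝ)+1) / N))
              (Set.projIcc 0 1 zero_le_one ((i:ℝ) / N)) := by rw [hθ]; push_cast; ring_nf
          _ ≤ _ := this
      have h2 : dist (((i:ℝ)+1) / N) ((i:ℝ) / N) = 1 / N := by
        have he : (((i:ℝ)+1) / N) - ((i:ℝ)/N) = 1/N := by field_simp; ring
        rw [Real.dist_eq, he, abs_of_nonneg (by positivity)]
      calc dist (θ (i+1)) (θ i) ≤ 1 / N := h1.trans_eq h2
        _ < η := by
          rw [div_lt_iff₀ hNpos]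
          calc (1:ℝ) = η * (1 / η) := by field_simp
            _ < η * N := by exact mul_lt_mul_of_pos_left hN hηpos
    have hγstep : ∀ i : ℕ, dist (γ (θ (i+1))) (γ (θ i)) < σ / 2 := fun i => hη (hθstep i)
    refine ⟨N * M, by positivity, fun k => ?_⟩
    have hterm : ∀ i : ℕ, dist (f^[k] (γ (θ (i+1)))) (f^[k] (γ (θ i))) ≤ M * q ^ k := by
      intro i
      have hmem : γ (θ i) ∈ S := mem_range_self _
      have hball2 : ball (γ (θ i)) (2 * (σ / 2)) ⊆ D := by
        intro y hy
        apply hσ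
        rw [Metric.mem_thickening_iff]
        exact ⟨γ (θ i), hmem, by rw [mem_ball] at hy; linarith [hy]⟩
      have h1 : γ (θ (i+1)) ∈ ball (γ (θ i)) (σ / 2) := by
        rw [mem_ball]; exact hγstep i
      have h2 : γ (θ i) ∈ ball (γ (θ i)) (σ / 2) := mem_ball_self (by positivity)
      have := lip k (γ (θ i)) (σ / 2) (by positivity) hball2 _ h1 _ h2
      rw [dist_eq_norm]
      calc ‖f^[k] (γ (θ (i+1))) - f^[k] (γ (θ i))‖
          ≤ M / ((1 + t) ^ k * (σ / 2)) * ‖γ (θ (i+1)) - γ (θ i)‖ := this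
        _ ≤ M / ((1 + t) ^ k * (σ / 2)) * (σ / 2) := by
            apply mul_le_mul_of_nonneg_left _ (by positivity)
            rw [← dist_eq_norm]
            exact (hγstep i).le
        _ = M * q ^ k := by
            rw [hq, inv_pow]
            field_simp
    have hθ0 : γ (θ 0) = a := by
      have : θ 0 = 0 := by
        apply Subtype.ext
        simp [hθ]
      rw [this]; exact γ.source
    have hθN : γ (θ N) = b := by
      have : θ N = 1 := by
        apply Subtype.ext
        simp [hθ, div_self hNpos.ne']
      rw [this]; exact γ.target
    have htele := dist_le_range_sum_dist (fun i => f^[k] (γ (θ i))) N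
    rw [dist_eq_norm] at htele
    have main : ‖f^[k] (γ (θ 0)) - f^[k] (γ (θ N))‖ ≤ N * M * q ^ k := by
      calc ‖f^[k] (γ (θ 0)) - f^[k] (γ (θ N))‖
        ≤ ∑ i ∈ Finset.range N, dist (f^[k] (γ (θ i))) (f^[k] (γ (θ (i+1)))) := htele
        _ ≤ ∑ i ∈ Finset.range N, M * q ^ k := by
            apply Finset.sum_le_sum
            intro i _
            rw [dist_comm]
            exact hterm i
        _ = N * M * q ^ k := by
            rw [Finset.sum_const, Finset.card_range, nsmul_eq_mul]; ring
    rw [hθ0, hθN] at main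
    exact main
  -- construct the fixed point as limit of the orbit of a₀
  set u : ℕ → (Fin n → ℂ) := fun k => f^[k] a₀ with hu
  obtain ⟨C₀, hC₀0, hC₀⟩ := chain a₀ ha₀ (f a₀) (hmaps ha₀)
  have hcauchy : CauchySeq u := by
    apply cauchySeq_of_le_geometric q C₀ hq1
    intro k
    rw [dist_eq_norm, show u (k+1) = f^[k] (f a₀) from Function.iterate_succ_apply f k a₀]
    exact hC₀ k
  obtain ⟨z₀, hz₀⟩ := cauchySeq_tendsto_of_complete hcauchy
  have hz₀K : z₀ ∈ K := by
    apply mem_closure_of_tendsto (hz₀.comp (tendsto_add_atTop_nat 1))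
    apply Eventually.of_forall
    intro k
    exact ⟨f^[k] a₀, hiterD k ha₀, (Function.iterate_succ_apply' f k a₀).symm⟩
  have hz₀D : z₀ ∈ D := hsub hz₀K
  have hfz₀ : f z₀ = z₀ := by
    have hc : ContinuousAt f z₀ := (hf.continuousOn.continuousAt (hDopen.mem_nhds hz₀D))
    have h1 : Tendsto (fun k => f (u k)) atTop (𝓝 (f z₀)) := hc.tendsto.comp hz₀
    have h2 : Tendsto (fun k => u (k+1)) atTop (𝓝 z₀) := hz₀.comp (tendsto_add_atTop_nat 1)
    have h3 : (fun k => f (u k)) = fun k => u (k+1) :=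
      funext fun k => (Function.iterate_succ_apply' f k a₀).symm
    rw [h3] at h1
    exact tendsto_nhds_unique h1 h2
  have hfixiter : ∀ k, f^[k] z₀ = z₀ := fun k => Function.iterate_fixed hfz₀ k
  -- uniqueness of the fixed point
  have huniq : ∀ z ∈ D, f z = z → z = z₀ := by
    intro z hzD hzfix
    obtain ⟨C, hC0, hC⟩ := chain z hzD z₀ hz₀D
    have hbnd : ∀ k, dist z z₀ ≤ C * q ^ k := by
      intro k
      have := hC k
      rwa [Function.iterate_fixed hzfix k, hfixiter k, ← dist_eq_norm] at this
    have htend : Tendsto (fun k => C * q ^ k) atTop (𝓝 0) := by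
      simpa using (tendsto_pow_atTop_nhds_zero_of_lt_one hq0.le hq1).const_mul C
    have : dist z z₀ ≤ 0 := ge_of_tendsto htend (Eventually.of_forall hbnd)
    rwa [← dist_le_zero]
  -- uniform geometric bound on K
  have unif : ∃ Cu : ℝ, ∀ w ∈ K, ∀ k, dist (f^[k] w) z₀ ≤ Cu * q ^ k := by
    obtain ⟨T, hTK, hTcover⟩ := hcpt.elim_nhds_subcover (fun w => ball w (δ / 2))
      (fun w _ => ball_mem_nhds w (by positivity))
    have hch : ∀ w : Fin n → ℂ, ∃ C : ℝ, 0 ≤ C ∧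
        (w ∈ D → ∀ k, ‖f^[k] w - f^[k] z₀‖ ≤ C * q ^ k) := by
      intro w
      by_cases hw : w ∈ D
      · obtain ⟨C, hC0, hC⟩ := chain w hw z₀ hz₀D
        exact ⟨C, hC0, fun _ => hC⟩
      · exact ⟨0, le_rfl, fun h => absurd h hw⟩
    choose Cf hCf0 hCf using hch
    refine ⟨M + ∑ w ∈ T, Cf w, fun w hw k => ?_⟩
    obtain ⟨j, hjT, hj⟩ := Set.mem_iUnion₂.mp (hTcover hw)
    have hjK : j ∈ K := hTK j hjT
    have hjD : j ∈ D := hsub hjK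
    have hball2 : ball j (2 * (δ / 2)) ⊆ D := by
      intro y hy
      apply hδ
      rw [Metric.mem_thickening_iff]
      refine ⟨j, hjK, ?_⟩
      rw [mem_ball] at hy
      linarith [hy]
    have hlip := lip k j (δ / 2) (by positivity) hball2 w hj j (mem_ball_self (by positivity))
    have h1 : dist (f^[k] w) (f^[k] j) ≤ M * q ^ k := by
      rw [dist_eq_norm]
      calc ‖f^[k] w - f^[k] j‖ ≤ M / ((1 + t) ^ k * (δ / 2)) * ‖w - j‖ := hlip
        _ ≤ M / ((1 + t) ^ k * (δ / 2)) * (δ / 2) := by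
            apply mul_le_mul_of_nonneg_left _ (by positivity)
            rw [← dist_eq_norm]
            rw [mem_ball] at hj
            exact hj.le
        _ = M * q ^ k := by
            rw [hq, inv_pow]
            field_simp
    have h2 : dist (f^[k] j) z₀ ≤ Cf j * q ^ k := by
      have := hCf j hjD k
      rwa [hfixiter k, ← dist_eq_norm] at this
    calc dist (f^[k] w) z₀ ≤ dist (f^[k] w) (f^[k] j) + dist (f^[k] j) z₀ :=
          dist_triangle _ _ _
      _ ≤ M * q ^ k + Cf j * q ^ k := add_le_add h1 h2
      _ ≤ (M + ∑ w ∈ T, Cf w) * q ^ k := by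
          have hle : Cf j ≤ ∑ w ∈ T, Cf w := Finset.single_le_sum (fun w _ => hCf0 w) hjT
          have hqk : (0:ℝ) ≤ q ^ k := pow_nonneg hq0.le k
          nlinarith
  obtain ⟨Cu, hCu⟩ := unif
  -- conclusion
  refine ⟨z₀, hz₀D, hfz₀, huniq, ?_⟩
  apply TendstoUniformlyOn.tendstoLocallyUniformlyOn
  rw [Metric.tendstoUniformlyOn_iff]
  intro ε hε
  have htend : Tendsto (fun k => Cu * q ^ k) atTop (𝓝 0) := by
    simpa using (tendsto_pow_atTop_nhds_zero_of_lt_one hq0.le hq1).const_mul Cu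
  obtain ⟨N₀, hN₀⟩ := Filter.eventually_atTop.mp (htend.eventually (gt_mem_nhds hε))
  filter_upwards [eventually_ge_atTop (N₀ + 1)] with k hk
  intro z hz
  obtain ⟨m, rfl⟩ : ∃ m, k = m + 1 := ⟨k - 1, by omega⟩
  have hm : N₀ ≤ m := by omega
  have h1 : f^[m+1] z = f^[m] (f z) := Function.iterate_succ_apply f m z
  rw [dist_comm, h1]
  calc dist (f^[m] (f z)) z₀ ≤ Cu * q ^ m := hCu (f z) (hfK z hz) m
    _ < ε := hN₀ m hm
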